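/- Let K be a field, d ≥ 1, and let q₁,…,q_m ∈ K[X₁,…,X_d]. Then the family (q₁,…,q_m) is algebraically dependent over K if and only if for all positive integers e₁,…,e_m the family (q₁^{e₁},…,q_m^{e_m}) is algebraically dependent over K. -/
import Mathlib

set_option synthInstance.maxHeartbeats 1000000
set_option maxHeartbeats 1000000
open MvPolynomial Polynomial

/-- Every element of `MvPolynomial` is integral over the image of the
substitution `Xᵢ ↦ Xᵢ ^ eᵢ` (all `eᵢ > 0`). -/
lemma isIntegral_range_pow_subst {K : Type*} [Field K] {m : ℕ}
    (e : Fin m → ℕ) (he : ∀ i, 0 < e i)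
    (p : MvPolynomial (Fin m) K) :
    IsIntegral ((MvPolynomial.aeval (fun i => (MvPolynomial.X i : MvPolynomial (Fin m) K) ^ e i) : MvPolynomial (Fin m) K →ₐ[K] MvPolynomial (Fin m) K).range) p := by
  set φ := (MvPolynomial.aeval (fun i => (MvPolynomial.X i : MvPolynomial (Fin m) K) ^ e i) : MvPolynomial (Fin m) K →ₐ[K] MvPolynomial (Fin m) K)
  set R' := φ.range
  have hX : ∀ i : Fin m, IsIntegral R' (MvPolynomial.X i : MvPolynomial (Fin m) K) := by
    intro i
    have hmem : (MvPolynomial.X i : MvPolynomial (Fin m) K) ^ e i ∈ R' :=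
      ⟨MvPolynomial.X i, by simp [φ]⟩
    refine ⟨Polynomial.X ^ e i - Polynomial.C ⟨_, hmem⟩,
      Polynomial.monic_X_pow_sub_C _ (he i).ne', ?_⟩
    simp only [Polynomial.eval₂_sub, Polynomial.eval₂_pow, Polynomial.eval₂_X, Polynomial.eval₂_C]
    simp [Subalgebra.algebraMap_eq]
  have hsub : MvPolynomial.X '' Set.univ ⊆ (integralClosure R' (MvPolynomial (Fin m) K) : Set (MvPolynomial (Fin m) K)) := by
    rintro _ ⟨i, -, rfl⟩
    exact hX i
  have hle : Algebra.adjoin K (Set.range (MvPolynomial.X : Fin m → MvPolynomial (Fin m) K)) ≤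
      (integralClosure R' (MvPolynomial (Fin m) K)).restrictScalars K := by
    rw [Algebra.adjoin_le_iff]
    rintro _ ⟨i, rfl⟩
    exact hX i
  have := hle (by rw [MvPolynomial.adjoin_range_X]; trivial : p ∈ Algebra.adjoin K (Set.range (MvPolynomial.X : Fin m → MvPolynomial (Fin m) K)))
  exact this

/-- Any nonzero `p` divides a nonzero element of the image of the
substitution `Xᵢ ↦ Xᵢ ^ eᵢ`. -/
lemma exists_dvd_pow_subst {K : Type*} [Field K] {m : ℕ}
    (e : Fin m → ℕ) (he : ∀ i, 0 < e i)
    (p : MvPolynomial (Fin m) K) (hp : p ≠ 0) :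
    ∃ p' : MvPolynomial (Fin m) K, p' ≠ 0 ∧
      p ∣ MvPolynomial.aeval (fun i => (MvPolynomial.X i : MvPolynomial (Fin m) K) ^ e i) p' := by
  set φ := (MvPolynomial.aeval (fun i => (MvPolynomial.X i : MvPolynomial (Fin m) K) ^ e i) :
    MvPolynomial (Fin m) K →ₐ[K] MvPolynomial (Fin m) K)
  set R' := φ.range
  obtain ⟨f, hf, hfp⟩ := isIntegral_range_pow_subst e he p
  have hf0 : f ≠ 0 := hf.ne_zero
  obtain ⟨g, hg, hnd⟩ := f.exists_eq_pow_rootMultiplicity_mul_and_not_dvd hf0 0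
  rw [map_zero, sub_zero] at hg hnd
  have hgc : g.coeff 0 ≠ 0 := fun h => hnd (Polynomial.X_dvd_iff.2 h)
  have hgp : Polynomial.eval₂ (algebraMap R' (MvPolynomial (Fin m) K)) p g = 0 := by
    have := hfp
    rw [hg] at this
    simp only [Polynomial.eval₂_mul, Polynomial.eval₂_pow, Polynomial.eval₂_X] at this
    rcases mul_eq_zero.1 this with h | h
    · exact absurd h (pow_ne_zero _ hp)
    · exact h
  have key : (algebraMap R' (MvPolynomial (Fin m) K)) (g.coeff 0) =
      p * (- Polynomial.eval₂ (algebraMap R' (MvPolynomial (Fin m) K)) p g.divX) := by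
    have := congrArg (Polynomial.eval₂ (algebraMap R' (MvPolynomial (Fin m) K)) p)
      (Polynomial.divX_mul_X_add g)
    rw [hgp] at this
    simp only [Polynomial.eval₂_add, Polynomial.eval₂_mul, Polynomial.eval₂_X,
      Polynomial.eval₂_C] at this
    linear_combination this
  obtain ⟨p', hp'⟩ := (g.coeff 0).2
  refine ⟨p', ?_, ?_⟩
  · rintro rfl
    apply hgc
    have : ((g.coeff 0 : R') : MvPolynomial (Fin m) K) = 0 := by rw [← hp']; simp
    exact Subtype.ext this
  · have : φ p' = (algebraMap R' (MvPolynomial (Fin m) K)) (g.coeff 0) := by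
      rw [Subalgebra.algebraMap_eq]; exact hp' ▸ rfl
    rw [show MvPolynomial.aeval (fun i => (MvPolynomial.X i : MvPolynomial (Fin m) K) ^ e i) p' = φ p' from rfl,
      this, key]
    exact Dvd.intro _ rfl

/-- **Lemma 5** (Leĭnartas's Lemma 1).
A finite family `(q₁,…,q_m)` of polynomials in `K[X₁,…,X_d]` is algebraically
dependent over `K` iff for all positive integers `e₁,…,e_m` the family
`(q₁^{e₁},…,q_m^{e_m})` is algebraically dependent over `K`. -/
theorem algebraicDependent_iff_powers_algebraicDependent
    {K : Type*} [Field K] {d m : ℕ} (hd : 1 ≤ d)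
    (q : Fin m → MvPolynomial (Fin d) K) :
    ¬ AlgebraicIndependent K q ↔
      ∀ e : Fin m → ℕ, (∀ i, 0 < e i) →
        ¬ AlgebraicIndependent K (fun i => q i ^ e i) := by
  constructor
  · intro h e he hind
    rw [algebraicIndependent_iff] at h
    push_neg at h
    obtain ⟨p, hp0, hpne⟩ := h
    obtain ⟨p', hp'ne, c, hc⟩ := exists_dvd_pow_subst e he p hpne
    apply hp'ne
    apply hind.eq_zero_of_aeval_eq_zero
    have comp : (MvPolynomial.aeval (fun i => q i ^ e i)) p' =
        MvPolynomial.aeval q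
          (MvPolynomial.aeval (fun i => (MvPolynomial.X i : MvPolynomial (Fin m) K) ^ e i) p') := by
      rw [← AlgHom.comp_apply]
      congr 1
      apply MvPolynomial.algHom_ext
      intro i
      simp
    rw [comp, hc, map_mul, hp0, zero_mul]
  · intro h
    have := h 1 (fun i => one_pos)
    simpa using this
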